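/- Let K be a closed convex cone and suppose x_1, x_2, …, x_n ∈ K are such that x_1 + ⋯ + x_n lies in the relative interior of K. Then there exists a subset I ⊆ [n] with |I| ≤ ℓ(K) − 1 such that Σ_{i∈I} x_i lies in the relative interior of K (equivalently, the smallest face of K containing Σ_{i∈I} x_i is K itself), where the empty sum is interpreted as 0. -/

import Mathlib

/-- A closed convex cone (containing the origin). -/
def IsClosedConvexCone {E : Type*} [AddCommGroup E] [Module ℝ E] [TopologicalSpace E]
    (K : Set E) : Prop :=
  IsClosed K ∧ Convex ℝ K ∧ (0 : E) ∈ K ∧ ∀ x ∈ K, ∀ t : ℝ, 0 ≤ t → t • x ∈ K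

/-- A face of a convex cone. -/
def IsFace {E : Type*} [AddCommGroup E] [Module ℝ E] (K F : Set E) : Prop :=
  F ⊆ K ∧ Convex ℝ F ∧
    ∀ ⦃x⦄, x ∈ K → ∀ ⦃y⦄, y ∈ K → ∀ ⦃α : ℝ⦄, 0 < α → α < 1 →
      α • x + (1 - α) • y ∈ F → x ∈ F ∧ y ∈ F

/-- `ℓ(K)`: the maximum length of a chain `F₁ ⊊ F₂ ⊊ ⋯ ⊊ F_l` of nonempty faces of `K`. -/
noncomputable def faceChainLength {E : Type*} [AddCommGroup E] [Module ℝ E] (K : Set E) : ℕ :=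
  sSup {l : ℕ | ∃ F : Fin l → Set E,
    (∀ i, IsFace K (F i) ∧ (F i).Nonempty) ∧ ∀ i j : Fin l, i < j → F i ⊂ F j}

set_option linter.unusedSectionVars false

open Set

section Helpers

/-- Points on the open segment between a point of the intrinsic interior and a point of a
convex set lie in the intrinsic interior. -/
lemma combo_mem_intrinsicInterior {E : Type*} [NormedAddCommGroup E] [NormedSpace ℝ E]
    {s : Set E} (hs : Convex ℝ s) {z w : E} (hz : z ∈ intrinsicInterior ℝ s) (hw : w ∈ s)
    {α : ℝ} (h0 : 0 < α) (h1 : α < 1) : α • z + (1 - α) • w ∈ intrinsicInterior ℝ s := by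
  obtain ⟨z', hz', hz'e⟩ := mem_intrinsicInterior.1 hz
  have hwS : w ∈ affineSpan ℝ s := subset_affineSpan ℝ s hw
  have hmem : ∀ (β : ℝ) (p : E), p ∈ affineSpan ℝ s → β • p + (1 - β) • w ∈ affineSpan ℝ s := by
    intro β p hp
    have := (affineSpan ℝ s).smul_vsub_vadd_mem β hp hwS hwS
    have heq : β • (p -ᵥ w) +ᵥ w = β • p + (1 - β) • w := by
      simp only [vsub_eq_sub, vadd_eq_add]; module
    rwa [heq] at this
  let f : affineSpan ℝ s → affineSpan ℝ s := fun p => ⟨α • (p : E) + (1 - α) • w, hmem α p p.2⟩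
  let g : affineSpan ℝ s → affineSpan ℝ s :=
    fun q => ⟨α⁻¹ • (q : E) + (1 - α⁻¹) • w, hmem α⁻¹ q q.2⟩
  have hcontg : Continuous g := by
    apply Continuous.subtype_mk
    exact (continuous_subtype_val.const_smul _).add continuous_const
  have hgf : g (f z') = z' := by
    apply Subtype.ext
    show α⁻¹ • (α • (z' : E) + (1 - α) • w) + (1 - α⁻¹) • w = (z' : E)
    match_scalars <;> field_simp <;> ring
  have hfz : f z' ∈ interior ((↑) ⁻¹' s : Set (affineSpan ℝ s)) := by
    rw [mem_interior]
    refine ⟨g ⁻¹' (interior ((↑) ⁻¹' s)), ?_, hcontg.isOpen_preimage _ isOpen_interior, ?_⟩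
    · intro q hq
      have h2 : g q ∈ ((↑) ⁻¹' s : Set (affineSpan ℝ s)) := interior_subset hq
      have hgq : (g q : E) ∈ s := h2
      have h3 : α • (g q : E) + (1 - α) • w ∈ s :=
        hs hgq hw h0.le (by linarith) (by ring)
      have heq : α • (g q : E) + (1 - α) • w = (q : E) := by
        show α • (α⁻¹ • (q : E) + (1 - α⁻¹) • w) + (1 - α) • w = (q : E)
        match_scalars <;> field_simp <;> ring
      show (q : E) ∈ s
      rwa [heq] at h3
    · show g (f z') ∈ interior _
      rw [hgf]; exact hz'
  exact mem_intrinsicInterior.2 ⟨f z', hfz, by rw [← hz'e]⟩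

variable {E : Type*} [AddCommGroup E] [Module ℝ E] [TopologicalSpace E]

section Face
variable {K F F' : Set E} (hK : IsClosedConvexCone K)
include hK

lemma cone_add_mem {a b : E} (ha : a ∈ K) (hb : b ∈ K) : a + b ∈ K := by
  have h := hK.2.1 ha hb (by norm_num : (0:ℝ) ≤ 1/2) (by norm_num : (0:ℝ) ≤ 1/2) (by norm_num)
  have h2 := hK.2.2.2 _ h 2 (by norm_num)
  have heq : (2:ℝ) • ((1/2 : ℝ) • a + (1/2 : ℝ) • b) = a + b := by module
  rwa [heq] at h2

lemma cone_sum_mem {ι : Type*} (I : Finset ι) (v : ι → E) (hv : ∀ i ∈ I, v i ∈ K) :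
    (∑ i ∈ I, v i) ∈ K := by
  classical
  induction I using Finset.induction with
  | empty => simpa using hK.2.2.1
  | insert _ _ hni ih =>
    rw [Finset.sum_insert hni]
    exact cone_add_mem hK (hv _ (Finset.mem_insert_self _ _))
      (ih fun i hi => hv i (Finset.mem_insert_of_mem hi))

lemma face_zero_mem (hF : IsFace K F) (hne : F.Nonempty) : (0 : E) ∈ F := by
  obtain ⟨z, hz⟩ := hne
  have h2z : (2:ℝ) • z ∈ K := hK.2.2.2 z (hF.1 hz) 2 (by norm_num)
  have hcombo : (1/2 : ℝ) • ((2:ℝ) • z) + (1 - 1/2 : ℝ) • (0:E) ∈ F := by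
    have : (1/2 : ℝ) • ((2:ℝ) • z) + (1 - 1/2 : ℝ) • (0:E) = z := by module
    rwa [this]
  exact (hF.2.2 h2z hK.2.2.1 (by norm_num) (by norm_num) hcombo).2

lemma face_smul_mem (hF : IsFace K F) {z : E} (hz : z ∈ F) {t : ℝ} (ht : 0 ≤ t) :
    t • z ∈ F := by
  have h0F : (0:E) ∈ F := face_zero_mem hK hF ⟨z, hz⟩
  rcases le_or_gt t 1 with h | h
  · have h1 : t • z + (1 - t) • (0:E) ∈ F := hF.2.1 hz h0F ht (by linarith) (by ring)
    rwa [smul_zero, add_zero] at h1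
  · have ht0 : (0:ℝ) < t := by linarith
    have htz : t • z ∈ K := hK.2.2.2 z (hF.1 hz) t ht
    have hcombo : (1/t : ℝ) • (t • z) + (1 - 1/t : ℝ) • (0:E) ∈ F := by
      have heq : (1/t : ℝ) • (t • z) + (1 - 1/t : ℝ) • (0:E) = z := by
        rw [smul_zero, add_zero, smul_smul, one_div, inv_mul_cancel₀ (by linarith), one_smul]
      rwa [heq]
    exact (hF.2.2 htz hK.2.2.1 (by positivity) (by rw [div_lt_one ht0]; linarith) hcombo).1

lemma face_add_mem (hF : IsFace K F) {a b : E} (ha : a ∈ F) (hb : b ∈ F) : a + b ∈ F := by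
  have h := hF.2.1 ha hb (by norm_num : (0:ℝ) ≤ 1/2) (by norm_num : (0:ℝ) ≤ 1/2) (by norm_num)
  have h2 := face_smul_mem hK hF h (by norm_num : (0:ℝ) ≤ 2)
  have : (2:ℝ) • ((1/2 : ℝ) • a + (1/2 : ℝ) • b) = a + b := by module
  rwa [this] at h2

lemma face_sum_mem (hF : IsFace K F) (hne : F.Nonempty) {ι : Type*} (I : Finset ι) (v : ι → E)
    (hv : ∀ i ∈ I, v i ∈ F) : (∑ i ∈ I, v i) ∈ F := by
  classical
  induction I using Finset.induction with
  | empty => simpa using face_zero_mem hK hF hne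
  | insert _ _ hni ih =>
    rw [Finset.sum_insert hni]
    exact face_add_mem hK hF (hv _ (Finset.mem_insert_self _ _))
      (ih fun i hi => hv i (Finset.mem_insert_of_mem hi))

lemma face_span_eq_sub (hF : IsFace K F) (hne : F.Nonempty) {v : E}
    (hv : v ∈ Submodule.span ℝ F) : ∃ a ∈ F, ∃ b ∈ F, v = a - b := by
  induction hv using Submodule.span_induction with
  | mem u hu => exact ⟨u, hu, 0, face_zero_mem hK hF hne, by simp⟩
  | zero => exact ⟨0, face_zero_mem hK hF hne, 0, face_zero_mem hK hF hne, by simp⟩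
  | add u v _ _ ihu ihv =>
    obtain ⟨a, ha, b, hb, rfl⟩ := ihu
    obtain ⟨c, hc, e, he, rfl⟩ := ihv
    exact ⟨a + c, face_add_mem hK hF ha hc, b + e, face_add_mem hK hF hb he, by abel⟩
  | smul c u _ ihu =>
    obtain ⟨a, ha, b, hb, rfl⟩ := ihu
    rcases le_or_gt 0 c with h | h
    · exact ⟨c • a, face_smul_mem hK hF ha h, c • b, face_smul_mem hK hF hb h, by module⟩
    · exact ⟨(-c) • b, face_smul_mem hK hF hb (by linarith), (-c) • a,
        face_smul_mem hK hF ha (by linarith), by module⟩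

lemma face_span_lt (hF : IsFace K F) (hF' : IsFace K F') (hne : F.Nonempty)
    (hlt : F ⊂ F') : Submodule.span ℝ F < Submodule.span ℝ F' := by
  refine lt_of_le_of_ne (Submodule.span_mono hlt.1) ?_
  intro heq
  obtain ⟨y, hyF', hyF⟩ := Set.exists_of_ssubset hlt
  have hy : y ∈ Submodule.span ℝ F := by
    rw [heq]; exact Submodule.subset_span hyF'
  obtain ⟨a, ha, b, hb, hab⟩ := face_span_eq_sub hK hF hne hy
  have h2y : (2:ℝ) • y ∈ K := hK.2.2.2 y (hF'.1 hyF') 2 (by norm_num)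
  have h2b : (2:ℝ) • b ∈ K := hK.2.2.2 b (hF.1 hb) 2 (by norm_num)
  have hcombo : (1/2 : ℝ) • ((2:ℝ) • y) + (1 - 1/2 : ℝ) • ((2:ℝ) • b) ∈ F := by
    have : (1/2 : ℝ) • ((2:ℝ) • y) + (1 - 1/2 : ℝ) • ((2:ℝ) • b) = a := by
      rw [hab]; module
    rwa [this]
  have h2yF : (2:ℝ) • y ∈ F := (hF.2.2 h2y h2b (by norm_num) (by norm_num) hcombo).1
  have : ((1:ℝ)/2) • ((2:ℝ) • y) ∈ F := face_smul_mem hK hF h2yF (by norm_num)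
  rw [smul_smul] at this
  norm_num at this
  exact hyF this

end Face

/-- The minimal face of the cone `K` containing `S`. -/
def minFace (K : Set E) (S : E) : Set E :=
  {y | y ∈ K ∧ ∃ ε : ℝ, 0 < ε ∧ S - ε • y ∈ K}

section MinFace
variable {K : Set E} {S : E} (hK : IsClosedConvexCone K) (hS : S ∈ K)
include hK hS

lemma minFace_shrink {y : E} {ε ε' : ℝ} (hy : S - ε • y ∈ K) (h0 : 0 < ε') (h1 : ε' ≤ ε) :
    S - ε' • y ∈ K := by
  have hε : 0 < ε := lt_of_lt_of_le h0 h1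
  have h : (ε'/ε) • (S - ε • y) + (1 - ε'/ε) • S ∈ K :=
    hK.2.1 hy hS (div_pos h0 hε).le (by
      have : ε'/ε ≤ 1 := by rw [div_le_one hε]; linarith
      linarith) (by ring)
  have heq : (ε'/ε) • (S - ε • y) + (1 - ε'/ε) • S = S - ε' • y := by
    match_scalars <;> field_simp <;> ring
  rwa [heq] at h

lemma minFace_isFace : IsFace K (minFace K S) := by
  refine ⟨fun y hy => hy.1, ?_, ?_⟩
  · rintro u ⟨hu, εu, hεu, hu'⟩ v ⟨hv, εv, hεv, hv'⟩ a b ha hb hab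
    obtain rfl : b = 1 - a := by linarith
    refine ⟨hK.2.1 hu hv ha hb hab, min εu εv, lt_min hεu hεv, ?_⟩
    have h1 : S - min εu εv • u ∈ K :=
      minFace_shrink hK hS hu' (lt_min hεu hεv) (min_le_left _ _)
    have h2 : S - min εu εv • v ∈ K :=
      minFace_shrink hK hS hv' (lt_min hεu hεv) (min_le_right _ _)
    have h := hK.2.1 h1 h2 ha hb hab
    have heq : a • (S - min εu εv • u) + (1 - a) • (S - min εu εv • v)
        = S - min εu εv • (a • u + (1 - a) • v) := by module
    rwa [heq] at h
  · rintro u hu v hv α h0 h1 ⟨_, ε, hε, hc⟩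
    constructor
    · refine ⟨hu, ε * α, mul_pos hε h0, ?_⟩
      have h3 : (S - ε • (α • u + (1 - α) • v)) + (ε * (1 - α)) • v ∈ K :=
        cone_add_mem hK hc (hK.2.2.2 v hv _ (mul_pos hε (by linarith)).le)
      have heq : (S - ε • (α • u + (1 - α) • v)) + (ε * (1 - α)) • v
          = S - (ε * α) • u := by module
      rwa [heq] at h3
    · refine ⟨hv, ε * (1 - α), mul_pos hε (by linarith), ?_⟩
      have h3 : (S - ε • (α • u + (1 - α) • v)) + (ε * α) • u ∈ K :=
        cone_add_mem hK hc (hK.2.2.2 u hu _ (mul_pos hε h0).le)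
      have heq : (S - ε • (α • u + (1 - α) • v)) + (ε * α) • u
          = S - (ε * (1 - α)) • v := by module
      rwa [heq] at h3

lemma self_mem_minFace : S ∈ minFace K S := by
  refine ⟨hS, 1/2, by norm_num, ?_⟩
  have h : (1/2 : ℝ) • S ∈ K := hK.2.2.2 S hS _ (by norm_num)
  have heq : (1/2 : ℝ) • S = S - (1/2 : ℝ) • S := by module
  rwa [heq] at h

lemma minFace_nonempty : (minFace K S).Nonempty := ⟨S, self_mem_minFace hK hS⟩

lemma minFace_subset_add {c : E} (hc : c ∈ K) : minFace K S ⊆ minFace K (S + c) := by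
  rintro y ⟨hy, ε, hε, hy'⟩
  refine ⟨hy, ε, hε, ?_⟩
  have h := cone_add_mem hK hy' hc
  have heq : S - ε • y + c = S + c - ε • y := by abel
  rwa [heq] at h

lemma mem_minFace_add {c : E} (hc : c ∈ K) : c ∈ minFace K (S + c) := by
  refine ⟨hc, 1/2, by norm_num, ?_⟩
  have h := cone_add_mem hK hS (hK.2.2.2 c hc _ (by norm_num : (0:ℝ) ≤ 1/2))
  have heq : S + (1/2 : ℝ) • c = S + c - (1/2 : ℝ) • c := by module
  rwa [heq] at h

end MinFace

/-- A chain of `l+1` nonempty faces of `K` ending at `G`. -/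
def hasChainTo (K : Set E) (l : ℕ) (G : Set E) : Prop :=
  ∃ F : Fin (l + 1) → Set E, (∀ i, IsFace K (F i) ∧ (F i).Nonempty) ∧
    (∀ i j : Fin (l + 1), i < j → F i ⊂ F j) ∧ F (Fin.last l) = G

variable {K : Set E}

lemma hasChainTo_zero {G : Set E} (hG : IsFace K G) (hne : G.Nonempty) :
    hasChainTo K 0 G :=
  ⟨fun _ => G, fun _ => ⟨hG, hne⟩, by
    intro i j hij
    have hi := i.2; have hj := j.2
    rw [Fin.lt_def] at hij
    omega, rfl⟩

lemma hasChainTo_succ {G G' : Set E} {l : ℕ} (h : hasChainTo K l G) (hGG' : G ⊂ G')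
    (hG' : IsFace K G') : hasChainTo K (l + 1) G' := by
  obtain ⟨F, hF, hchain, hlast⟩ := h
  refine ⟨fun i => if h : (i : ℕ) < l + 1 then F ⟨i, h⟩ else G', ?_, ?_, ?_⟩
  · intro i
    by_cases h : (i : ℕ) < l + 1
    · simpa [h] using hF ⟨i, h⟩
    · have hGne : G'.Nonempty := Set.Nonempty.mono hGG'.1 (hlast ▸ (hF (Fin.last l)).2)
      simpa [h] using ⟨hG', hGne⟩
  · intro i j hij
    have hi : (i : ℕ) < l + 1 := by
      have hj : (j : ℕ) < l + 2 := j.2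
      have := hij
      omega
    dsimp only
    rw [dif_pos hi]
    by_cases h : (j : ℕ) < l + 1
    · rw [dif_pos h]
      exact hchain ⟨i, hi⟩ ⟨j, h⟩ (by simpa using hij)
    · rw [dif_neg h]
      rcases Nat.lt_or_ge (i : ℕ) l with h2 | h2
      · have h3 : F ⟨i, hi⟩ ⊂ F (Fin.last l) := hchain _ _ (by simp [Fin.lt_def, h2])
        rw [hlast] at h3
        exact h3.trans hGG'
      · have h3 : (⟨i, hi⟩ : Fin (l + 1)) = Fin.last l := by
          apply Fin.ext; simp only [Fin.val_last]; omega
        rw [h3, hlast]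
        exact hGG'
  · have h : ¬ ((Fin.last (l + 1) : ℕ) < l + 1) := by simp
    dsimp only
    rw [dif_neg h]

lemma hasChainTo_le_faceChainLength {d : ℕ} {K : Set (EuclideanSpace ℝ (Fin d))}
    (hK : IsClosedConvexCone K) {G : Set (EuclideanSpace ℝ (Fin d))} {l : ℕ}
    (h : hasChainTo K l G) : l + 1 ≤ faceChainLength K := by
  have hbdd : BddAbove {l : ℕ | ∃ F : Fin l → Set (EuclideanSpace ℝ (Fin d)),
      (∀ i, IsFace K (F i) ∧ (F i).Nonempty) ∧ ∀ i j : Fin l, i < j → F i ⊂ F j} := by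
    refine ⟨d + 1, fun m hm => ?_⟩
    obtain ⟨F, hF, hchain⟩ := hm
    rcases m with - | m
    · omega
    have key : ∀ k (hk : k < m + 1),
        k ≤ Module.finrank ℝ (Submodule.span ℝ (F ⟨k, hk⟩)) := by
      intro k
      induction k with
      | zero => omega
      | succ k ih =>
        intro hk
        have hk' : k < m + 1 := by omega
        have hlt : F ⟨k, hk'⟩ ⊂ F ⟨k + 1, hk⟩ := hchain _ _ (by simp [Fin.lt_def])
        have hspan := face_span_lt hK (hF _).1 (hF _).1 (hF ⟨k, hk'⟩).2 hlt
        have := Submodule.finrank_lt_finrank_of_lt hspan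
        have := ih hk'
        omega
    have h1 := key m (by omega)
    have h2 : Module.finrank ℝ (Submodule.span ℝ (F ⟨m, by omega⟩)) ≤ d := by
      have := Submodule.finrank_le (Submodule.span ℝ (F ⟨m, by omega⟩))
      simpa using this
    omega
  apply le_csSup hbdd
  obtain ⟨F, hF, hchain, _⟩ := h
  exact ⟨F, hF, hchain⟩

end Helpers

/-- If `K` is a closed convex cone and `x₁, …, xₙ ∈ K` are such that
`x₁ + ⋯ + xₙ` is in the relative interior of `K`, then there is `I ⊆ [n]` with
`|I| ≤ ℓ(K) - 1` such that `Σ_{i ∈ I} xᵢ` is in the relative interior of `K`. -/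
theorem statement_4 {d : ℕ} (K : Set (EuclideanSpace ℝ (Fin d)))
    (hK : IsClosedConvexCone K) (n : ℕ) (x : Fin n → EuclideanSpace ℝ (Fin d))
    (hx : ∀ i, x i ∈ K) (hsum : (∑ i, x i) ∈ intrinsicInterior ℝ K) :
    ∃ I : Finset (Fin n), I.card ≤ faceChainLength K - 1 ∧
      (∑ i ∈ I, x i) ∈ intrinsicInterior ℝ K := by
  classical
  have hSK : ∀ I : Finset (Fin n), (∑ i ∈ I, x i) ∈ K :=
    fun I => cone_sum_mem hK I x fun i _ => hx i
  -- every summand indexed by `I` belongs to the minimal face of the partial sum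
  have hmemI : ∀ (I : Finset (Fin n)) (i : Fin n), i ∈ I →
      x i ∈ minFace K (∑ j ∈ I, x j) := by
    intro I i hmem
    refine ⟨hx i, 1/2, by norm_num, ?_⟩
    have heq : ∑ j ∈ I, x j - (1/2:ℝ) • x i = (1/2:ℝ) • x i + ∑ j ∈ I.erase i, x j := by
      rw [← Finset.add_sum_erase _ _ hmem]; module
    rw [heq]
    exact cone_add_mem hK (hK.2.2.2 _ (hx i) _ (by norm_num))
      (cone_sum_mem hK _ x fun j _ => hx j)
  have claim : ∀ k : ℕ,
      (∃ I : Finset (Fin n), hasChainTo K I.card (minFace K (∑ i ∈ I, x i)) ∧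
        ∀ i, x i ∈ minFace K (∑ i ∈ I, x i)) ∨
      (∃ I : Finset (Fin n), I.card = k ∧
        hasChainTo K I.card (minFace K (∑ i ∈ I, x i))) := by
    intro k
    induction k with
    | zero =>
      right
      refine ⟨∅, Finset.card_empty, ?_⟩
      rw [Finset.card_empty]
      exact hasChainTo_zero (minFace_isFace hK (hSK ∅)) (minFace_nonempty hK (hSK ∅))
    | succ k ih =>
      rcases ih with h | ⟨I, hcard, hch⟩
      · exact Or.inl h
      by_cases hall : ∀ i, x i ∈ minFace K (∑ i ∈ I, x i)
      · exact Or.inl ⟨I, hch, hall⟩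
      right
      push_neg at hall
      obtain ⟨i, hi⟩ := hall
      have hiI : i ∉ I := fun hmem => hi (hmemI I i hmem)
      have hsum' : ∑ j ∈ insert i I, x j = (∑ j ∈ I, x j) + x i := by
        rw [Finset.sum_insert hiI]; abel
      have hne : minFace K (∑ j ∈ I, x j) ≠ minFace K ((∑ j ∈ I, x j) + x i) :=
        fun heq => hi (heq ▸ mem_minFace_add hK (hSK I) (hx i))
      have hsub : minFace K (∑ j ∈ I, x j) ⊂ minFace K ((∑ j ∈ I, x j) + x i) :=
        (minFace_subset_add hK (hSK I) (hx i)).ssubset_of_ne hne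
      have hS'K : (∑ j ∈ I, x j) + x i ∈ K := cone_add_mem hK (hSK I) (hx i)
      have hch' : hasChainTo K (I.card + 1) (minFace K ((∑ j ∈ I, x j) + x i)) :=
        hasChainTo_succ hch hsub (minFace_isFace hK hS'K)
      refine ⟨insert i I, ?_, ?_⟩
      · rw [Finset.card_insert_of_notMem hiI, hcard]
      · rw [Finset.card_insert_of_notMem hiI, hsum']
        exact hch'
  have key : ∃ I : Finset (Fin n), hasChainTo K I.card (minFace K (∑ i ∈ I, x i)) ∧
      ∀ i, x i ∈ minFace K (∑ i ∈ I, x i) := by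
    rcases claim n with h | ⟨I, hcard, hch⟩
    · exact h
    · have huniv : I = Finset.univ := Finset.eq_univ_of_card I (by simpa using hcard)
      exact ⟨I, hch, fun i => hmemI I i (huniv ▸ Finset.mem_univ i)⟩
  obtain ⟨I, hch, hall⟩ := key
  refine ⟨I, ?_, ?_⟩
  · have := hasChainTo_le_faceChainLength hK hch
    omega
  · -- the total sum lies in the minimal face of the partial sum
    have hTmem : (∑ i, x i) ∈ minFace K (∑ i ∈ I, x i) :=
      face_sum_mem hK (minFace_isFace hK (hSK I)) (minFace_nonempty hK (hSK I))
        Finset.univ x fun i _ => hall i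
    obtain ⟨-, ε, hε, hεK⟩ := hTmem
    set S := ∑ i ∈ I, x i with hSdef
    set T := ∑ i, x i with hTdef
    set ε₀ : ℝ := min ε (1/2) with hε₀def
    have hε₀pos : 0 < ε₀ := lt_min hε (by norm_num)
    have hε₀lt : ε₀ < 1 := lt_of_le_of_lt (min_le_right _ _) (by norm_num)
    have hS0 : S - ε₀ • T ∈ K := minFace_shrink hK (hSK I) hεK hε₀pos (min_le_left _ _)
    have h1ε₀ : (0:ℝ) < 1 - ε₀ := by linarith
    have hw : (1 - ε₀)⁻¹ • (S - ε₀ • T) ∈ K :=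
      hK.2.2.2 _ hS0 _ (inv_nonneg.mpr h1ε₀.le)
    have hcombo := combo_mem_intrinsicInterior hK.2.1 hsum hw hε₀pos hε₀lt
    have heq : ε₀ • T + (1 - ε₀) • ((1 - ε₀)⁻¹ • (S - ε₀ • T)) = S := by
      rw [smul_inv_smul₀ h1ε₀.ne']
      abel
    rwa [heq] at hcombo
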